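/- Let λ ∈ (0,1), σ > 0, and θ ∈ (0,1) with θ ≠ 1/2. Let c be the unique zero of f(c) = (c/((2θ−1+2cθ)(2−2θ−c(2θ−1))))^((1−θ)/(θ−1/2)) − (2θ−1+2cθ)²/(1−λ) in I(θ), set s̄ = (c/((2θ−1+2cθ)(2−2θ−c(2θ−1))))^(1/(2θ−1)) and g(s) = (−cs + (2θ−1+2cθ)s^(2θ))/(s − (2−2θ−c(2θ−1))s^(2θ)), and define μ̃(s) = σ²·g'(s)²·s²/(g(s)(c+g(s))) and σ̃(s) = σ·g'(s)·s/g(s). Then ∫₁^{s̄} (μ̃(s)²/(2σ̃(s)²)) · ((2θ−1)/(s̄^(2θ−1) − 1)) · s^(2θ−2) ds = (2θ−1)σ²s̄ / (2(1+c)(s̄ + (−2 − c + 2θ(1+c))·s̄^(2θ))). -/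

import Mathlib

open Real MeasureTheory intervalIntegral

/-- The interval `I(θ)` in which the root `c` of `f` is located. -/
noncomputable def noTradeInterval (θ : ℝ) : Set ℝ :=
  if θ < 1/2 then Set.Ioi ((1 - θ)/θ)
  else if θ < 1 then Set.Ioo ((1 - θ)/θ) ((1 - θ)/(θ - 1/2))
  else Set.Ioo ((1 - θ)/θ) 0

set_option maxHeartbeats 1600000 in
theorem growth_optimal_growth_rate_closed_form
    (lam θ sigma c sbar : ℝ) (g mutilde sigmatilde : ℝ → ℝ)
    (hlam : lam ∈ Set.Ioo (0:ℝ) 1) (hsigma : 0 < sigma)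
    (hθ : θ ∈ Set.Ioo (0:ℝ) 1) (hθhalf : θ ≠ 1/2)
    (hcI : c ∈ noTradeInterval θ)
    (hfc : (c / ((2*θ - 1 + 2*c*θ) * (2 - 2*θ - c*(2*θ - 1)))) ^ ((1 - θ)/(θ - 1/2))
        - (2*θ - 1 + 2*c*θ)^2 / (1 - lam) = 0)
    (hsbar : sbar = (c / ((2*θ - 1 + 2*c*θ) * (2 - 2*θ - c*(2*θ - 1)))) ^ (1/(2*θ - 1)))
    (hg : ∀ s : ℝ, g s = (-c*s + (2*θ - 1 + 2*c*θ) * s ^ (2*θ))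
        / (s - (2 - 2*θ - c*(2*θ - 1)) * s ^ (2*θ)))
    (hmutilde : ∀ s : ℝ, mutilde s = sigma^2 * (deriv g s)^2 * s^2 / (g s * (c + g s)))
    (hsigmatilde : ∀ s : ℝ, sigmatilde s = sigma * deriv g s * s / g s) :
    ∫ s in (1:ℝ)..sbar,
        (mutilde s)^2 / (2 * (sigmatilde s)^2)
          * ((2*θ - 1) / (sbar ^ (2*θ - 1) - 1)) * s ^ (2*θ - 2)
      = (2*θ - 1) * sigma^2 * sbar
          / (2 * (1 + c) * (sbar + (-2 - c + 2*θ*(1 + c)) * sbar ^ (2*θ))) := by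
  obtain ⟨hlam0, hlam1⟩ := hlam
  obtain ⟨hθ0, hθ1⟩ := hθ
  have hσ : sigma ≠ 0 := ne_of_gt hsigma
  have hθcase : θ < 1/2 ∨ 1/2 < θ := lt_or_gt_of_ne hθhalf
  rw [noTradeInterval] at hcI
  have hcc : (1 - θ)/θ < c := by
    by_cases h : θ < 1/2
    · rw [if_pos h] at hcI; exact hcI
    · rw [if_neg h, if_pos hθ1] at hcI; exact hcI.1
  have hcpos : 0 < c := lt_trans (div_pos (by linarith) hθ0) hcc
  have hc1θ : 1 - θ < c*θ := by rwa [div_lt_iff₀ hθ0] at hcc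
  have ha1 : 1 < 2*θ - 1 + 2*c*θ := by linarith [hc1θ]
  have ha0 : 0 < 2*θ - 1 + 2*c*θ := by linarith
  have hb0 : 0 < 2 - 2*θ - c*(2*θ - 1) := by
    rcases hθcase with h | h
    · nlinarith [mul_pos hcpos (show (0:ℝ) < 1 - 2*θ by linarith)]
    · have h2 : c < (1 - θ)/(θ - 1/2) := by
        rw [if_neg (by linarith : ¬ θ < 1/2), if_pos hθ1] at hcI
        exact hcI.2
      have h3 := (lt_div_iff₀ (by linarith : (0:ℝ) < θ - 1/2)).mp h2
      linarith
  have hbne : (2 - 2*θ - c*(2*θ - 1)) ≠ 0 := ne_of_gt hb0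
  have h2θ : (2*θ - 1) ≠ 0 := by
    rcases hθcase with h | h
    · linarith
    · linarith
  have hc1 : (0:ℝ) < 1 + c := by linarith
  have hbase0 : 0 < c / ((2*θ - 1 + 2*c*θ) * (2 - 2*θ - c*(2*θ - 1))) :=
    div_pos hcpos (mul_pos ha0 hb0)
  have hgt1 : 1 < (c / ((2*θ - 1 + 2*c*θ) * (2 - 2*θ - c*(2*θ - 1)))) ^ ((1 - θ)/(θ - 1/2)) := by
    have hfc' : (c / ((2*θ - 1 + 2*c*θ) * (2 - 2*θ - c*(2*θ - 1)))) ^ ((1 - θ)/(θ - 1/2))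
        = (2*θ - 1 + 2*c*θ)^2 / (1 - lam) := by linarith
    rw [hfc', lt_div_iff₀ (by linarith)]
    nlinarith [mul_lt_mul_of_pos_left ha1 ha0]
  have hside : (1/2 < θ ∧ 1 < c / ((2*θ - 1 + 2*c*θ) * (2 - 2*θ - c*(2*θ - 1)))) ∨
      (θ < 1/2 ∧ c / ((2*θ - 1 + 2*c*θ) * (2 - 2*θ - c*(2*θ - 1))) < 1) := by
    have hib := (Real.one_lt_rpow_iff_of_pos hbase0).mp hgt1
    rcases hθcase with h | h
    · right
      refine ⟨h, ?_⟩
      rcases hib with ⟨_, h2⟩ | ⟨h1, _⟩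
      · exfalso
        have : (1 - θ)/(θ - 1/2) < 0 := div_neg_of_pos_of_neg (by linarith) (by linarith)
        linarith
      · exact h1
    · left
      refine ⟨h, ?_⟩
      rcases hib with ⟨h1, _⟩ | ⟨_, h2⟩
      · exact h1
      · exfalso
        have : 0 < (1 - θ)/(θ - 1/2) := div_pos (by linarith) (by linarith)
        linarith
  have hsbar1 : 1 < sbar := by
    rw [hsbar]
    rcases hside with ⟨h, hB⟩ | ⟨h, hB⟩
    · exact (Real.one_lt_rpow_iff_of_pos hbase0).mpr
        (Or.inl ⟨hB, one_div_pos.mpr (by linarith)⟩)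
    · exact (Real.one_lt_rpow_iff_of_pos hbase0).mpr
        (Or.inr ⟨hB, div_neg_of_pos_of_neg one_pos (by linarith)⟩)
  have hsbar0 : 0 < sbar := lt_trans one_pos hsbar1
  have hsbt : sbar ^ (2*θ - 1) = c / ((2*θ - 1 + 2*c*θ) * (2 - 2*θ - c*(2*θ - 1))) := by
    rw [hsbar, ← Real.rpow_mul hbase0.le, one_div_mul_cancel h2θ, Real.rpow_one]
  have hKne : sbar ^ (2*θ - 1) - 1 ≠ 0 := by
    rw [hsbt]
    rcases hside with ⟨h, hB⟩ | ⟨h, hB⟩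
    · exact sub_ne_zero_of_ne (ne_of_gt hB)
    · exact sub_ne_zero_of_ne (ne_of_lt hB)
  have hbB : (2 - 2*θ - c*(2*θ - 1)) * sbar ^ (2*θ - 1) = c / (2*θ - 1 + 2*c*θ) := by
    rw [hsbt]
    rw [eq_div_iff ha0.ne', mul_div_assoc', div_mul_eq_mul_div, div_eq_iff (mul_ne_zero ha0.ne' hbne)]
    ring
  -- key sign facts valid on the whole interval
  have hkey : ∀ s : ℝ, s ∈ Set.uIcc (1:ℝ) sbar →
      0 < s ∧ 0 < (2*θ - 1) * (1 - (2 - 2*θ - c*(2*θ - 1)) * s ^ (2*θ - 1))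
        ∧ 0 < (2*θ - 1) * ((2*θ - 1 + 2*c*θ) * s ^ (2*θ - 1) - c) := by
    intro s hs
    rw [Set.uIcc_of_le hsbar1.le] at hs
    obtain ⟨hs1, hs2⟩ := hs
    have hs0 : (0:ℝ) < s := lt_of_lt_of_le one_pos hs1
    refine ⟨hs0, ?_, ?_⟩
    · rcases hside with ⟨h, _⟩ | ⟨h, _⟩
      · have hm : s ^ (2*θ - 1) ≤ sbar ^ (2*θ - 1) :=
          Real.rpow_le_rpow hs0.le hs2 (by linarith)
        have h1 : (2 - 2*θ - c*(2*θ - 1)) * s ^ (2*θ - 1) ≤ c / (2*θ - 1 + 2*c*θ) := by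
          rw [← hbB]
          exact mul_le_mul_of_nonneg_left hm hb0.le
        have h2 : c / (2*θ - 1 + 2*c*θ) < 1 := (div_lt_one ha0).mpr
          (by linarith [mul_pos (show (0:ℝ) < 2*θ - 1 by linarith) hc1])
        exact mul_pos (by linarith) (by linarith)
      · have hm : sbar ^ (2*θ - 1) ≤ s ^ (2*θ - 1) :=
          Real.rpow_le_rpow_of_nonpos hs0 hs2 (by linarith)
        have h1 : c / (2*θ - 1 + 2*c*θ) ≤ (2 - 2*θ - c*(2*θ - 1)) * s ^ (2*θ - 1) := by
          rw [← hbB]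
          exact mul_le_mul_of_nonneg_left hm hb0.le
        have h2 : 1 < c / (2*θ - 1 + 2*c*θ) := (one_lt_div ha0).mpr
          (by linarith [mul_pos (show (0:ℝ) < 1 - 2*θ by linarith) hc1])
        exact mul_pos_of_neg_of_neg (by linarith) (by linarith)
    · rcases hside with ⟨h, _⟩ | ⟨h, _⟩
      · have hm : 1 ≤ s ^ (2*θ - 1) := Real.one_le_rpow hs1 (by linarith)
        have h4 := mul_le_mul_of_nonneg_left hm ha0.le
        rw [mul_one] at h4
        exact mul_pos (by linarith)
          (by linarith [mul_pos (show (0:ℝ) < 2*θ - 1 by linarith) hc1])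
      · have hm : s ^ (2*θ - 1) ≤ 1 := Real.rpow_le_one_of_one_le_of_nonpos hs1 (by linarith)
        have h4 := mul_le_mul_of_nonneg_left hm ha0.le
        rw [mul_one] at h4
        exact mul_pos_of_neg_of_neg (by linarith)
          (by linarith [mul_pos (show (0:ℝ) < 1 - 2*θ by linarith) hc1])
  -- pointwise identity of the integrand with an explicit rational function
  have hEq : Set.EqOn
      (fun s => (mutilde s)^2 / (2 * (sigmatilde s)^2)
          * ((2*θ - 1) / (sbar ^ (2*θ - 1) - 1)) * s ^ (2*θ - 2))
      (fun s => sigma^2*(2*θ - 1)^2/2 * ((2*θ - 1) / (sbar ^ (2*θ - 1) - 1))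
          * (s ^ (2*θ - 2) / (1 - (2 - 2*θ - c*(2*θ - 1)) * s ^ (2*θ - 1))^2))
      (Set.uIcc (1:ℝ) sbar) := by
    intro s hs
    obtain ⟨hs0, hD1, hN1⟩ := hkey s hs
    have hsne : s ≠ 0 := ne_of_gt hs0
    have hvpos : 0 < s ^ (2*θ - 1) := Real.rpow_pos_of_pos hs0 _
    have h1bv : 1 - (2 - 2*θ - c*(2*θ - 1)) * s ^ (2*θ - 1) ≠ 0 := by
      intro hq
      rw [hq, mul_zero] at hD1
      exact lt_irrefl 0 hD1
    have hNv : (2*θ - 1 + 2*c*θ) * s ^ (2*θ - 1) - c ≠ 0 := by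
      intro hq
      rw [hq, mul_zero] at hN1
      exact lt_irrefl 0 hN1
    have hu : s ^ (2*θ) = s ^ (2*θ - 1) * s := by
      have h := Real.rpow_add hs0 (2*θ - 1) 1
      rw [Real.rpow_one] at h
      rw [← h]
      norm_num
    have hv2 : s ^ (2*θ - 2) = s ^ (2*θ - 1) / s := by
      rw [show (2*θ - 2:ℝ) = (2*θ - 1) - 1 by ring, Real.rpow_sub hs0, Real.rpow_one]
    have hDne' : s - (2 - 2*θ - c*(2*θ - 1)) * (s ^ (2*θ - 1) * s) ≠ 0 := by
      rw [(by ring : s - (2 - 2*θ - c*(2*θ - 1)) * (s ^ (2*θ - 1) * s)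
          = s * (1 - (2 - 2*θ - c*(2*θ - 1)) * s ^ (2*θ - 1)))]
      exact mul_ne_zero hsne h1bv
    have hDne : s - (2 - 2*θ - c*(2*θ - 1)) * s ^ (2*θ) ≠ 0 := by
      rw [hu]; exact hDne'
    have hNne' : -c*s + (2*θ - 1 + 2*c*θ) * (s ^ (2*θ - 1) * s) ≠ 0 := by
      rw [(by ring : -c*s + (2*θ - 1 + 2*c*θ) * (s ^ (2*θ - 1) * s)
          = s * ((2*θ - 1 + 2*c*θ) * s ^ (2*θ - 1) - c))]
      exact mul_ne_zero hsne hNv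
    have hrp : HasDerivAt (fun x:ℝ => x ^ (2*θ)) (2*θ * s ^ (2*θ - 1)) s :=
      Real.hasDerivAt_rpow_const (Or.inl hsne)
    have hNd : HasDerivAt (fun x:ℝ => -c*x + (2*θ - 1 + 2*c*θ) * x ^ (2*θ))
        (-c + (2*θ - 1 + 2*c*θ) * (2*θ * s ^ (2*θ - 1))) s := by
      have h1 : HasDerivAt (fun x:ℝ => -c*x) (-c) s := by
        simpa using (hasDerivAt_id s).const_mul (-c)
      exact h1.add (hrp.const_mul _)
    have hDd : HasDerivAt (fun x:ℝ => x - (2 - 2*θ - c*(2*θ - 1)) * x ^ (2*θ))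
        (1 - (2 - 2*θ - c*(2*θ - 1)) * (2*θ * s ^ (2*θ - 1))) s :=
      (hasDerivAt_id s).sub (hrp.const_mul _)
    have hgd : HasDerivAt g
        (((-c + (2*θ - 1 + 2*c*θ) * (2*θ * s ^ (2*θ - 1)))
            * (s - (2 - 2*θ - c*(2*θ - 1)) * s ^ (2*θ))
          - (-c*s + (2*θ - 1 + 2*c*θ) * s ^ (2*θ))
            * (1 - (2 - 2*θ - c*(2*θ - 1)) * (2*θ * s ^ (2*θ - 1))))
          / (s - (2 - 2*θ - c*(2*θ - 1)) * s ^ (2*θ))^2) s := by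
      have hfun : g = fun x => (-c*x + (2*θ - 1 + 2*c*θ) * x ^ (2*θ))
          / (x - (2 - 2*θ - c*(2*θ - 1)) * x ^ (2*θ)) := funext hg
      rw [hfun]
      exact hNd.div hDd hDne
    have E1 : deriv g s = (2*θ - 1)^2 * (1 + c)^2 * (s ^ (2*θ - 1) * s)
        / (s - (2 - 2*θ - c*(2*θ - 1)) * (s ^ (2*θ - 1) * s))^2 := by
      rw [hgd.deriv, hu]
      congr 1
      ring
    have E3 : c + g s = (2*θ - 1) * (1 + c)^2 * (s ^ (2*θ - 1) * s)
        / (s - (2 - 2*θ - c*(2*θ - 1)) * (s ^ (2*θ - 1) * s)) := by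
      rw [hg s, hu]
      rw [eq_div_iff hDne', add_mul, div_mul_cancel₀ _ hDne']
      ring
    have hgne : g s ≠ 0 := by
      rw [hg s, hu]; exact div_ne_zero hNne' hDne'
    have hcgne : c + g s ≠ 0 := by
      rw [E3]
      exact div_ne_zero (mul_ne_zero (mul_ne_zero h2θ (pow_ne_zero 2 (ne_of_gt hc1)))
        (mul_ne_zero (ne_of_gt hvpos) hsne)) hDne'
    have hGne : deriv g s ≠ 0 := by
      rw [E1]
      exact div_ne_zero (mul_ne_zero (mul_ne_zero (pow_ne_zero 2 h2θ)
        (pow_ne_zero 2 (ne_of_gt hc1))) (mul_ne_zero (ne_of_gt hvpos) hsne))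
        (pow_ne_zero 2 hDne')
    have step1 : mutilde s ^ 2 / (2 * sigmatilde s ^ 2)
        = sigma^2 / 2 * (deriv g s * s / (c + g s))^2 := by
      rw [hmutilde s, hsigmatilde s]
      field_simp
    have step2 : deriv g s * s / (c + g s)
        = (2*θ - 1) / (1 - (2 - 2*θ - c*(2*θ - 1)) * s ^ (2*θ - 1)) := by
      rw [E1, E3]
      rw [(by ring : s - (2 - 2*θ - c*(2*θ - 1)) * (s ^ (2*θ - 1) * s)
          = s * (1 - (2 - 2*θ - c*(2*θ - 1)) * s ^ (2*θ - 1)))]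
      field_simp
    dsimp only
    rw [step1, step2]
    field_simp
  rw [intervalIntegral.integral_congr hEq]
  -- antiderivative
  have hder : ∀ s ∈ Set.uIcc (1:ℝ) sbar,
      HasDerivAt (fun x => sigma^2*(2*θ - 1)/(2*(2 - 2*θ - c*(2*θ - 1)))
          * ((2*θ - 1) / (sbar ^ (2*θ - 1) - 1))
          * (1 - (2 - 2*θ - c*(2*θ - 1)) * x ^ (2*θ - 1))⁻¹)
        (sigma^2*(2*θ - 1)^2/2 * ((2*θ - 1) / (sbar ^ (2*θ - 1) - 1))
          * (s ^ (2*θ - 2) / (1 - (2 - 2*θ - c*(2*θ - 1)) * s ^ (2*θ - 1))^2)) s := by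
    intro s hs
    obtain ⟨hs0, hD1, -⟩ := hkey s hs
    have hsne : s ≠ 0 := ne_of_gt hs0
    have h1bv : 1 - (2 - 2*θ - c*(2*θ - 1)) * s ^ (2*θ - 1) ≠ 0 := by
      intro hq
      rw [hq, mul_zero] at hD1
      exact lt_irrefl 0 hD1
    have hv2 : s ^ (2*θ - 2) = s ^ (2*θ - 1) / s := by
      rw [show (2*θ - 2:ℝ) = (2*θ - 1) - 1 by ring, Real.rpow_sub hs0, Real.rpow_one]
    have hrp : HasDerivAt (fun x:ℝ => x ^ (2*θ - 1)) ((2*θ - 1) * s ^ (2*θ - 1 - 1)) s :=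
      Real.hasDerivAt_rpow_const (Or.inl hsne)
    have hh : HasDerivAt (fun x:ℝ => 1 - (2 - 2*θ - c*(2*θ - 1)) * x ^ (2*θ - 1))
        (-((2 - 2*θ - c*(2*θ - 1)) * ((2*θ - 1) * s ^ (2*θ - 1 - 1)))) s :=
      (hrp.const_mul _).const_sub 1
    have hinv := (hh.inv h1bv).const_mul
      (sigma^2*(2*θ - 1)/(2*(2 - 2*θ - c*(2*θ - 1))) * ((2*θ - 1) / (sbar ^ (2*θ - 1) - 1)))
    have hv1 : s ^ (2*θ - 1 - 1) = s ^ (2*θ - 1) / s := by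
      rw [Real.rpow_sub hs0, Real.rpow_one]
    refine hinv.congr_deriv ?_
    rw [hv2, hv1]
    have hb' : 2 * (1 - θ) - (2 * θ - 1) * c ≠ 0 := by intro h; apply hbne; linarith
    have h1' : 1 - (2 * (1 - θ) - (2 * θ - 1) * c) * s ^ (2 * θ - 1) ≠ 0 := by
      intro h; apply h1bv; linarith
    field_simp
  have hcontF : ContinuousOn
      (fun s => sigma^2*(2*θ - 1)^2/2 * ((2*θ - 1) / (sbar ^ (2*θ - 1) - 1))
          * (s ^ (2*θ - 2) / (1 - (2 - 2*θ - c*(2*θ - 1)) * s ^ (2*θ - 1))^2))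
      (Set.uIcc (1:ℝ) sbar) := by
    apply ContinuousOn.mul continuousOn_const
    apply ContinuousOn.div
    · exact fun s hs =>
        (Real.continuousAt_rpow_const s _ (Or.inl (ne_of_gt (hkey s hs).1))).continuousWithinAt
    · exact (continuousOn_const.sub (continuousOn_const.mul (fun s hs =>
        (Real.continuousAt_rpow_const s _
          (Or.inl (ne_of_gt (hkey s hs).1))).continuousWithinAt))).pow 2
    · intro s hs
      obtain ⟨hs0, hD1, -⟩ := hkey s hs
      have h1bv : 1 - (2 - 2*θ - c*(2*θ - 1)) * s ^ (2*θ - 1) ≠ 0 := by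
        intro hq
        rw [hq, mul_zero] at hD1
        exact lt_irrefl 0 hD1
      exact pow_ne_zero 2 h1bv
  rw [intervalIntegral.integral_eq_sub_of_hasDerivAt hder hcontF.intervalIntegrable]
  -- final evaluation
  have hA1 : 1 - (2 - 2*θ - c*(2*θ - 1)) * sbar ^ (2*θ - 1) ≠ 0 := by
    have h1 := (hkey sbar Set.right_mem_uIcc).2.1
    intro hq
    rw [hq, mul_zero] at h1
    exact lt_irrefl 0 h1
  have hA2 : 1 - (2 - 2*θ - c*(2*θ - 1)) ≠ 0 := by
    have h1 := (hkey 1 Set.left_mem_uIcc).2.1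
    rw [Real.one_rpow, mul_one] at h1
    intro hq
    rw [hq, mul_zero] at h1
    exact lt_irrefl 0 h1
  have hsbu : sbar ^ (2*θ) = sbar ^ (2*θ - 1) * sbar := by
    have h := Real.rpow_add hsbar0 (2*θ - 1) 1
    rw [Real.rpow_one] at h
    rw [← h]
    norm_num
  have hrden : sbar + (-2 - c + 2*θ*(1 + c)) * (sbar ^ (2*θ - 1) * sbar) ≠ 0 := by
    rw [(by ring : sbar + (-2 - c + 2*θ*(1 + c)) * (sbar ^ (2*θ - 1) * sbar)
        = sbar * (1 - (2 - 2*θ - c*(2*θ - 1)) * sbar ^ (2*θ - 1)))]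
    exact mul_ne_zero (ne_of_gt hsbar0) hA1
  simp only [Real.one_rpow, mul_one]
  rw [hsbu]
  have hb' : 2 * (1 - θ) - (2 * θ - 1) * c ≠ 0 := by intro h; apply hbne; linarith
  have hA1' : 1 - (2 * (1 - θ) - (2 * θ - 1) * c) * sbar ^ (2 * θ - 1) ≠ 0 := by
    intro h; apply hA1; linarith
  have hA2' : 1 - (2 * (1 - θ) - (2 * θ - 1) * c) ≠ 0 := by intro h; apply hA2; linarith
  have hr' : 1 + sbar ^ (2 * θ - 1) * (-2 - c + 2 * θ * (1 + c)) ≠ 0 := by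
    intro h; apply hA1; linarith
  field_simp
  ring
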